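/- Let R > 0 and let δ > 0 satisfy δ ≤ (2⁴⁹ · 5³ / 3³⁰)^{2/29} R^{−40/29}. Then for every k > 0, k⁴/R² + (360^{1/4}/4) δ^{1/8}/R − 2 c₁² k δ ≥ 0, where c₁ := 3^{3/4}/2^{3/2} (so c₁² = 3^{3/2}/8). -/

import Mathlib

/-- Reduced form of the stress-free spectral constraint: if
`δ ≤ (2⁴⁹·5³/3³⁰)^{2/29} R^{-40/29}`, then for every `k > 0`,
`k⁴/R² + (360^{1/4}/4) δ^{1/8}/R - 2c₁² k δ ≥ 0` with `c₁ = 3^{3/4}/2^{3/2}`. -/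
theorem stress_free_reduced_spectral_inequality
    (R δ : ℝ) (hR : 0 < R) (hδ : 0 < δ)
    (hδle : δ ≤ ((2:ℝ)^49 * 5^3 / 3^30) ^ ((2:ℝ)/29) * R ^ (-(40:ℝ)/29)) :
    ∀ k : ℝ, 0 < k →
      k^4 / R^2 + (360:ℝ) ^ ((1:ℝ)/4) / 4 * δ ^ ((1:ℝ)/8) / R
        - 2 * (3 ^ ((3:ℝ)/4) / 2 ^ ((3:ℝ)/2))^2 * k * δ ≥ 0 := by
  intro k hk
  -- `2 c₁² = 3^{3/2}/4`
  have hc : 2 * ((3:ℝ) ^ ((3:ℝ)/4) / 2 ^ ((3:ℝ)/2))^2 = 3 ^ ((3:ℝ)/2) / 4 := by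
    rw [div_pow, ← Real.rpow_natCast ((3:ℝ) ^ ((3:ℝ)/4)) 2,
      ← Real.rpow_natCast ((2:ℝ) ^ ((3:ℝ)/2)) 2,
      ← Real.rpow_mul (by norm_num : (0:ℝ) ≤ 3),
      ← Real.rpow_mul (by norm_num : (0:ℝ) ≤ 2)]
    norm_num; ring
  set c : ℝ := 3 ^ ((3:ℝ)/2) / 4 with hcdef
  have hcpos : (0:ℝ) < c := by positivity
  rw [hc]
  -- Young's inequality with exponents 4, 4/3
  have hpq : Real.HolderConjugate 4 (4/3) := ⟨by norm_num, by norm_num, by norm_num⟩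
  have ha : (0:ℝ) ≤ k * (2/R) ^ ((1:ℝ)/2) := by positivity
  have hb : (0:ℝ) ≤ c * δ * (R/2) ^ ((1:ℝ)/2) := by positivity
  have young := Real.young_inequality_of_nonneg ha hb hpq
  -- the product is `c k δ`
  have hab : (k * (2/R) ^ ((1:ℝ)/2)) * (c * δ * (R/2) ^ ((1:ℝ)/2)) = c * k * δ := by
    have h1 : (2/R) ^ ((1:ℝ)/2) * (R/2) ^ ((1:ℝ)/2) = 1 := by
      rw [← Real.mul_rpow (by positivity) (by positivity),
        show (2/R) * (R/2) = 1 by field_simp]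
      simp
    calc (k * (2/R) ^ ((1:ℝ)/2)) * (c * δ * (R/2) ^ ((1:ℝ)/2))
        = (c * k * δ) * ((2/R) ^ ((1:ℝ)/2) * (R/2) ^ ((1:ℝ)/2)) := by ring
      _ = c * k * δ := by rw [h1]; ring
  -- the first Young term is `k⁴/R²`
  have ha4 : (k * (2/R) ^ ((1:ℝ)/2)) ^ (4:ℝ) / 4 = k^4 / R^2 := by
    rw [Real.mul_rpow (le_of_lt hk) (by positivity),
      ← Real.rpow_mul (by positivity : (0:ℝ) ≤ 2/R),
      show ((1:ℝ)/2*4) = ((2:ℕ):ℝ) by norm_num, Real.rpow_natCast,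
      show (4:ℝ) = ((4:ℕ):ℝ) by norm_num, Real.rpow_natCast]
    field_simp; ring
  -- the second Young term is dominated by the middle term, thanks to `hδle`
  have hterm : (c * δ * (R/2) ^ ((1:ℝ)/2)) ^ ((4:ℝ)/3) / (4/3)
      ≤ (360:ℝ) ^ ((1:ℝ)/4) / 4 * δ ^ ((1:ℝ)/8) / R := by
    set K : ℝ := (2:ℝ)^49 * 5^3 / 3^30 with hKdef
    have hKpos : (0:ℝ) < K := by positivity
    have hy0 : (0:ℝ) ≤ (360:ℝ) ^ ((1:ℝ)/4) * 2 ^ ((10:ℝ)/3) / 27 := by positivity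
    have hy : ((360:ℝ) ^ ((1:ℝ)/4) * 2 ^ ((10:ℝ)/3) / 27) ^ (12:ℕ) = K := by
      rw [div_pow, mul_pow, ← Real.rpow_natCast ((360:ℝ) ^ ((1:ℝ)/4)) 12,
        ← Real.rpow_natCast ((2:ℝ) ^ ((10:ℝ)/3)) 12,
        ← Real.rpow_mul (by norm_num : (0:ℝ) ≤ 360),
        ← Real.rpow_mul (by norm_num : (0:ℝ) ≤ 2)]
      push_cast
      rw [show ((1:ℝ)/4*12) = ((3:ℕ):ℝ) by norm_num,
        show ((10:ℝ)/3*12) = ((40:ℕ):ℝ) by norm_num,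
        Real.rpow_natCast, Real.rpow_natCast]
      rw [hKdef]; norm_num
    have hKc : K ^ ((1:ℝ)/12) = (360:ℝ) ^ ((1:ℝ)/4) * 2 ^ ((10:ℝ)/3) / 27 := by
      rw [← hy, ← Real.rpow_natCast ((360:ℝ) ^ ((1:ℝ)/4) * 2 ^ ((10:ℝ)/3) / 27) 12,
        ← Real.rpow_mul hy0]
      norm_num
    have hδ29 : δ ^ ((29:ℝ)/24) ≤ K ^ ((1:ℝ)/12) * R ^ (-(5:ℝ)/3) := by
      calc δ ^ ((29:ℝ)/24) ≤ (K ^ ((2:ℝ)/29) * R ^ (-(40:ℝ)/29)) ^ ((29:ℝ)/24) :=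
            Real.rpow_le_rpow (le_of_lt hδ) hδle (by norm_num)
        _ = K ^ ((1:ℝ)/12) * R ^ (-(5:ℝ)/3) := by
            rw [Real.mul_rpow (by positivity) (by positivity),
              ← Real.rpow_mul (le_of_lt hKpos), ← Real.rpow_mul (le_of_lt hR)]
            norm_num
    have hL : (c * δ * (R/2) ^ ((1:ℝ)/2)) ^ ((4:ℝ)/3)
        = 9 / 2 ^ ((8:ℝ)/3) * (δ ^ ((1:ℝ)/8) * δ ^ ((29:ℝ)/24)) * (R ^ ((2:ℝ)/3) / 2 ^ ((2:ℝ)/3)) := by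
      rw [hcdef, Real.mul_rpow (by positivity) (by positivity),
        Real.mul_rpow (by positivity) (le_of_lt hδ),
        Real.div_rpow (by positivity) (by norm_num : (0:ℝ) ≤ 4),
        ← Real.rpow_mul (by norm_num : (0:ℝ) ≤ 3),
        show (4:ℝ) = (2:ℝ) ^ (2:ℝ) by norm_num [show (2:ℝ)^(2:ℝ) = 2^(2:ℕ) from Real.rpow_natCast 2 2],
        ← Real.rpow_mul (by norm_num : (0:ℝ) ≤ 2),
        ← Real.rpow_mul (by positivity : (0:ℝ) ≤ R/2),
        Real.div_rpow (le_of_lt hR) (by norm_num : (0:ℝ) ≤ 2),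
        ← Real.rpow_add hδ]
      norm_num
    rw [hL]
    have hR1 : R ^ (-(5:ℝ)/3) * R ^ ((2:ℝ)/3) * R = 1 := by
      rw [← Real.rpow_add hR]
      norm_num [Real.rpow_neg_one, inv_mul_cancel₀ (ne_of_gt hR)]
    calc 9 / 2 ^ ((8:ℝ)/3) * (δ ^ ((1:ℝ)/8) * δ ^ ((29:ℝ)/24)) * (R ^ ((2:ℝ)/3) / 2 ^ ((2:ℝ)/3)) / (4/3)
        ≤ 9 / 2 ^ ((8:ℝ)/3) * (δ ^ ((1:ℝ)/8) * (K ^ ((1:ℝ)/12) * R ^ (-(5:ℝ)/3))) * (R ^ ((2:ℝ)/3) / 2 ^ ((2:ℝ)/3)) / (4/3) := by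
          gcongr
      _ = (360:ℝ) ^ ((1:ℝ)/4) / 4 * δ ^ ((1:ℝ)/8) / R := by
          rw [hKc]
          have h2 : (2:ℝ) ^ ((10:ℝ)/3) = 2 ^ ((8:ℝ)/3) * 2 ^ ((2:ℝ)/3) := by
            rw [← Real.rpow_add (by norm_num : (0:ℝ) < 2)]; norm_num
          rw [h2]
          field_simp
          have hR1' : R ^ (-((5:ℝ)/3)) * R ^ ((2:ℝ)/3) * R = 1 := by rw [← neg_div]; exact hR1
          linear_combination 27 * hR1'
  -- put everything together
  rw [hab, ha4] at young
  linarith [young, hterm]
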